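/- arXiv:2108.01332 — 2 statements merged into one kernel-verified Lean document; each statement's English description precedes it below -/
import Mathlib

section
/- Define c_n = Σ_{k≥1} (2^{k+1}−1)·2^{-k}·P(φ^W_{−k} = n) for n ≥ 1. Then for 0 < z < 1, Σ_{n≥1} c_n z^n = 2(1−w)/w − (1−w)/(1+w), where w = w(z) = 1 − (1 − √(1−z²))/z, and consequently lim_{z↑1} √(1−z) · Σ_{n≥1} c_n z^n = √2. -/
open MeasureTheory Set Filter
open scoped ENNReal

noncomputable section

/-- The sample space of coin flips: `{−1,1}^ℕ`, coded by `Bool` (`true` ↦ `+1`). -/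
abbrev Om : Type := ℕ → Bool

/-- The simple symmetric random walk `W_n = ε₁ + ⋯ + ε_n` with `ε_i = ±1`. -/
def W (ω : Om) (n : ℕ) : ℤ := ∑ i ∈ Finset.range n, (if ω i then (1:ℤ) else -1)

/-- The event `{φ^W_{-k} = n}`: the first hitting time of `-k` by the walk equals `n`. -/
def hitW (k n : ℕ) : Set Om :=
  {ω : Om | W ω n = -(k:ℤ) ∧ ∀ m : ℕ, 1 ≤ m → m < n → W ω m ≠ -(k:ℤ)}

/-- `c_n = ∑_{k≥1} (2^{k+1}-1)·2^{-k}·P(φ^W_{-k} = n)` (as a real number). -/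
def cReal (P : Measure Om) (n : ℕ) : ℝ :=
  ∑' k : ℕ, ((2:ℝ)^(k+2) - 1) * (1/2)^(k+1) * (P (hitW (k+1) n)).toReal

open scoped Classical
section Aux

lemma W_zero (ω : Om) : W ω 0 = 0 := by simp [W]

lemma W_succ (ω : Om) (n : ℕ) : W ω (n+1) = W ω n + (if ω n then 1 else -1) :=
  Finset.sum_range_succ _ _

lemma W_congr {ω ω' : Om} {n : ℕ} (h : ∀ i < n, ω i = ω' i) : W ω n = W ω' n :=
  Finset.sum_congr rfl (fun i hi => by rw [h i (Finset.mem_range.1 hi)])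

lemma hitW_congr {k n : ℕ} {ω ω' : Om} (h : ∀ i < n, ω i = ω' i) :
    ω ∈ hitW k n → ω' ∈ hitW k n := by
  rintro ⟨h1, h2⟩
  have key : ∀ m ≤ n, W ω m = W ω' m := fun m hm =>
    W_congr (fun i hi => h i (lt_of_lt_of_le hi hm))
  exact ⟨(key n le_rfl) ▸ h1, fun m hm1 hm2 => (key m hm2.le) ▸ h2 m hm1 hm2⟩

lemma neg_le_W (ω : Om) (n : ℕ) : -(n:ℤ) ≤ W ω n := by
  induction n with
  | zero => simp [W_zero]
  | succ n ih =>
    rw [W_succ]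
    push_cast
    have : (-1:ℤ) ≤ (if ω n then 1 else -1) := by split <;> omega
    omega

lemma exists_hit {ω : Om} {n : ℕ} {c : ℤ} (hc : c ≤ 0) (hn : W ω n ≤ c) :
    ∃ m ≤ n, W ω m = c := by
  have hex : ∃ m, W ω m ≤ c := ⟨n, hn⟩
  set m := Nat.find hex with hm
  have hmn : m ≤ n := Nat.find_le hn
  have hmc : W ω m ≤ c := Nat.find_spec hex
  refine ⟨m, hmn, ?_⟩
  rcases Nat.eq_zero_or_pos m with h0 | h0
  · rw [h0] at hmc ⊢; rw [W_zero] at hmc ⊢; omega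
  · obtain ⟨m', hm'⟩ := Nat.exists_eq_succ_of_ne_zero h0.ne'
    have hprev : ¬ W ω m' ≤ c := Nat.find_min hex (hm ▸ hm' ▸ Nat.lt_succ_self m')
    rw [hm', W_succ] at hmc ⊢
    have : (-1:ℤ) ≤ (if ω m' then 1 else -1) := by split <;> omega
    omega

/-- Functions vanishing (= false) from `n` on. -/
def E (n : ℕ) : Finset Om :=
  (Finset.univ : Finset (Fin n → Bool)).image (fun f i => if h : i < n then f ⟨i, h⟩ else false)

lemma mem_E {n : ℕ} {f : Om} : f ∈ E n ↔ ∀ i, n ≤ i → f i = false := by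
  constructor
  · rintro hf i hi
    simp only [E, Finset.mem_image] at hf
    obtain ⟨g, -, rfl⟩ := hf
    simp [Nat.not_lt.2 hi]
  · intro hf
    simp only [E, Finset.mem_image]
    refine ⟨fun j => f j, Finset.mem_univ _, ?_⟩
    funext i
    by_cases h : i < n
    · simp [h]
    · simp [h, hf i (Nat.not_lt.1 h)]
  
lemma card_E_le (n : ℕ) : (E n).card ≤ 2 ^ n := by
  refine le_trans Finset.card_image_le ?_
  simp

/-- number of paths of length `n` first hitting `-k` at time `n`. -/
def Nk (k n : ℕ) : ℕ := ((E n).filter (fun f => f ∈ hitW k n)).card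

lemma Nk_le (k n : ℕ) : Nk k n ≤ 2 ^ n :=
  le_trans (Finset.card_filter_le _ _) (card_E_le n)

lemma Nk_zero (k : ℕ) (hk : 1 ≤ k) : Nk k 0 = 0 := by
  rw [Nk, Finset.card_eq_zero, Finset.filter_eq_empty_iff]
  rintro f - ⟨h1, -⟩
  rw [W_zero] at h1
  omega

lemma Nk_eq_zero_of_lt {k n : ℕ} (h : n < k) : Nk k n = 0 := by
  rw [Nk, Finset.card_eq_zero, Finset.filter_eq_empty_iff]
  rintro f - ⟨h1, -⟩
  have := neg_le_W f n
  omega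

def cyl (n : ℕ) (f : Om) : Set Om := {ω : Om | ∀ i < n, ω i = f i}

lemma measurableSet_cyl (n : ℕ) (f : Om) : MeasurableSet (cyl n f) := by
  have : cyl n f = ⋂ i ∈ Finset.range n, (fun ω : Om => ω i) ⁻¹' {f i} := by
    ext ω; simp [cyl]
  rw [this]
  exact MeasurableSet.biInter (Finset.range n).countable_toSet
    (fun i _ => (measurable_pi_apply i) (MeasurableSet.singleton (f i)))

lemma hitW_eq_biUnion (k n : ℕ) :
    hitW k n = ⋃ f ∈ (E n).filter (fun f => f ∈ hitW k n), cyl n f := by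
  ext ω
  simp only [mem_iUnion, Finset.mem_filter, exists_prop]
  constructor
  · intro hω
    set f : Om := fun i => if i < n then ω i else false with hf
    have hagree : ∀ i < n, ω i = f i := fun i hi => by simp [hf, hi]
    refine ⟨f, ⟨mem_E.2 fun i hi => by simp [hf, Nat.not_lt.2 hi], hitW_congr hagree hω⟩,
      fun i hi => hagree i hi⟩
  · rintro ⟨f, ⟨-, hf⟩, hc⟩
    exact hitW_congr (fun i hi => (hc i hi).symm) hf

lemma measurableSet_hitW (k n : ℕ) : MeasurableSet (hitW k n) := by
  rw [hitW_eq_biUnion]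
  exact (Finset.measurableSet_biUnion _ (fun f _ => measurableSet_cyl n f))

theorem P_hitW (P : Measure Om)
    (hP : ∀ (n : ℕ) (f : ℕ → Bool), P {ω : Om | ∀ i < n, ω i = f i} = (1/2 : ℝ≥0∞)^n)
    (k n : ℕ) : P (hitW k n) = (Nk k n : ℝ≥0∞) * (1/2 : ℝ≥0∞)^n := by
  rw [hitW_eq_biUnion]
  rw [measure_biUnion_finset ?hd (fun f _ => measurableSet_cyl n f)]
  · have hc : ∀ f : Om, P (cyl n f) = (1/2:ℝ≥0∞)^n := fun f => hP n f
    rw [Finset.sum_congr rfl (fun f _ => hc f), Finset.sum_const, Nk, nsmul_eq_mul]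
  case hd =>
    rintro f hf g hg hfg
    simp only [Finset.coe_filter, Set.mem_setOf_eq] at hf hg
    refine Set.disjoint_left.2 fun ω hωf hωg => hfg ?_
    funext i
    by_cases hi : i < n
    · rw [← hωf i hi, ← hωg i hi]
    · rw [mem_E.1 hf.1 i (Nat.not_lt.1 hi), mem_E.1 hg.1 i (Nat.not_lt.1 hi)]

def consP (b : Bool) (f : Om) : Om := fun i => match i with | 0 => b | (j+1) => f j
def shiftP (f : Om) : Om := fun i => f (i+1)

lemma W_shift (f : Om) (m : ℕ) :
    W f (m+1) = (if f 0 then 1 else -1) + W (shiftP f) m := by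
  rw [W, Finset.sum_range_succ']
  rw [add_comm]
  rfl

lemma Nk_one_one : Nk 1 1 = 1 := by
  rw [Nk]
  have : (E 1).filter (fun f => f ∈ hitW 1 1) = {fun _ => false} := by
    ext f
    simp only [Finset.mem_filter, Finset.mem_singleton]
    constructor
    · rintro ⟨hE, h1, -⟩
      have h0 : f 0 = false := by
        by_contra h
        rw [Bool.not_eq_false] at h
        rw [show (1:ℕ) = 0 + 1 from rfl, W_succ, W_zero, h] at h1
        norm_num at h1
      funext i
      rcases Nat.eq_zero_or_pos i with rfl | hi
      · exact h0
      · exact mem_E.1 hE i hi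
    · rintro rfl
      refine ⟨mem_E.2 fun i _ => rfl, ?_, by omega⟩
      rw [show (1:ℕ) = 0 + 1 from rfl, W_succ, W_zero]
      norm_num
  rw [this, Finset.card_singleton]

lemma Nk_one_succ {n : ℕ} (hn : 1 ≤ n) : Nk 1 (n+1) = Nk 2 n := by
  rw [Nk, Nk]
  refine Finset.card_bij' (fun f _ => shiftP f) (fun g _ => consP true g) ?_ ?_ ?_ ?_
  · -- forward membership
    intro f hf
    obtain ⟨hE, h1, h2⟩ := Finset.mem_filter.1 hf
    have hf0 : f 0 = true := by
      by_contra h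
      rw [Bool.not_eq_true] at h
      exact h2 1 le_rfl (by omega) (by rw [show (1:ℕ) = 0+1 from rfl, W_succ, W_zero, h]; norm_num)
    have key : ∀ m, W f (m+1) = 1 + W (shiftP f) m := by
      intro m; rw [W_shift, hf0]; norm_num
    refine Finset.mem_filter.2 ⟨mem_E.2 fun i hi => mem_E.1 hE (i+1) (by omega), ?_, ?_⟩
    · have := key n; rw [h1] at *; push_cast at *; omega
    · intro m hm1 hm2
      have := h2 (m+1) (by omega) (by omega)
      have k2 := key m
      intro hc; rw [hc] at k2; push_cast at *; omega
  · -- backward membership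
    intro g hg
    obtain ⟨hE, h1, h2⟩ := Finset.mem_filter.1 hg
    have key : ∀ m, W (consP true g) (m+1) = 1 + W g m := by
      intro m
      rw [W_shift]
      have e1 : consP true g 0 = true := rfl
      have e2 : shiftP (consP true g) = g := by funext i; rfl
      rw [e1, e2]; norm_num
    refine Finset.mem_filter.2 ⟨mem_E.2 fun i hi => ?_, ?_, ?_⟩
    · match i, hi with
      | (j+1), hi => exact mem_E.1 hE j (by omega)
    · have := key n; rw [h1] at this; push_cast at *; omega
    · intro m hm1 hm2
      match m, hm1 with
      | 1, _ =>
        have := key 0; rw [W_zero] at this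
        intro hc; rw [hc] at this; norm_num at this
      | (m'+1), _ =>
        rcases Nat.eq_zero_or_pos m' with rfl | hm'
        · have := key 0; rw [W_zero] at this
          intro hc; rw [hc] at this; norm_num at this
        · have := h2 m' hm' (by omega)
          have k2 := key m'
          intro hc; rw [hc] at k2; push_cast at *; omega
  · -- left inverse
    intro f hf
    obtain ⟨hE, h1, h2⟩ := Finset.mem_filter.1 hf
    have hf0 : f 0 = true := by
      by_contra h
      rw [Bool.not_eq_true] at h
      exact h2 1 le_rfl (by omega) (by rw [show (1:ℕ) = 0+1 from rfl, W_succ, W_zero, h]; norm_num)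
    funext i
    match i with
    | 0 => simp [consP, hf0]
    | (j+1) => rfl
  · intro g _; funext i; rfl

-- R2

def truncP (m : ℕ) (f : Om) : Om := fun i => if i < m then f i else false
def dropP (m : ℕ) (f : Om) : Om := fun i => f (i + m)
def concatP (m : ℕ) (a b : Om) : Om := fun i => if i < m then a i else b (i - m)

lemma W_dropP (f : Om) (m t : ℕ) : W f (m + t) = W f m + W (dropP m f) t := by
  induction t with
  | zero => simp [W_zero]
  | succ t ih =>
    rw [show m + (t+1) = (m+t)+1 from rfl, W_succ, ih, W_succ]
    have : f (m + t) = dropP m f t := by rw [dropP]; congr 1; omega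
    rw [this, add_assoc]

lemma dropP_concatP (m : ℕ) (a b : Om) : dropP m (concatP m a b) = b := by
  funext i
  simp only [dropP, concatP]
  rw [if_neg (by omega), Nat.add_sub_cancel]

lemma W_concatP_le (m : ℕ) (a b : Om) {j : ℕ} (hj : j ≤ m) :
    W (concatP m a b) j = W a j :=
  W_congr (fun i hi => by simp only [concatP]; rw [if_pos (by omega)])

lemma W_concatP_ge (m : ℕ) (a b : Om) (t : ℕ) :
    W (concatP m a b) (m + t) = W a m + W b t := by
  rw [W_dropP, dropP_concatP, W_concatP_le m a b le_rfl]

lemma Nk_conv {k : ℕ} (hk : 1 ≤ k) (n : ℕ) :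
    Nk (k+1) n = ∑ m ∈ Finset.range (n+1), Nk 1 m * Nk k (n-m) := by
  classical
  set A := (E n).filter (fun f => f ∈ hitW (k+1) n) with hA
  have hcover : A = (Finset.range (n+1)).biUnion
      (fun m => A.filter (fun f => W f m = -1 ∧ ∀ j < m, W f j ≠ -1)) := by
    ext f
    simp only [Finset.mem_biUnion, Finset.mem_range, Finset.mem_filter]
    constructor
    · intro hf
      have h1 : W f n = -((k:ℤ)+1) := by
        have := (Finset.mem_filter.1 hf).2.1
        push_cast at this ⊢; exact this
      have hex1 : ∃ m ≤ n, W f m = -1 := exists_hit (by omega) (by omega)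
      have hex : ∃ m, W f m = -1 := ⟨hex1.choose, hex1.choose_spec.2⟩
      refine ⟨Nat.find hex, by have := Nat.find_min' hex hex1.choose_spec.2; omega,
        hf, Nat.find_spec hex, fun j hj => Nat.find_min hex hj⟩
    · rintro ⟨m, -, hf, -⟩; exact hf
  rw [show Nk (k+1) n = A.card from rfl, hcover, Finset.card_biUnion]
  · refine Finset.sum_congr rfl fun m hm => ?_
    rw [Finset.mem_range] at hm
    rcases Nat.eq_zero_or_pos m with rfl | hm1
    · -- m = 0 : empty
      rw [Nk_zero 1 le_rfl, zero_mul, Finset.card_eq_zero, Finset.filter_eq_empty_iff]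
      rintro f - ⟨h0, -⟩
      rw [W_zero] at h0; norm_num at h0
    rcases eq_or_lt_of_le (Nat.lt_succ_iff.1 hm) with rfl | hmn
    · -- m = n : empty
      rw [Nat.sub_self, Nk_zero k hk, mul_zero, Finset.card_eq_zero,
        Finset.filter_eq_empty_iff]
      rintro f hf ⟨h0, -⟩
      have h1 : W f m = -((k:ℤ)+1) := by
        have := (Finset.mem_filter.1 hf).2.1
        push_cast at this ⊢; exact this
      omega
    · -- 1 ≤ m < n : bijection with product
      rw [show Nk 1 m * Nk k (n-m) =
        (((E m).filter (fun f => f ∈ hitW 1 m)) ×ˢ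
         ((E (n-m)).filter (fun f => f ∈ hitW k (n-m)))).card by
          rw [Finset.card_product]; rfl]
      refine Finset.card_bij' (fun f _ => (truncP m f, dropP m f))
        (fun p _ => concatP m p.1 p.2) ?_ ?_ ?_ ?_
      · -- forward membership
        rintro f hf
        obtain ⟨hfA, hWm, hmin⟩ := Finset.mem_filter.1 hf
        obtain ⟨hE, h1, h2⟩ := Finset.mem_filter.1 hfA
        have h1' : W f n = -((k:ℤ)+1) := by push_cast at h1 ⊢; exact h1
        have hWtr : ∀ j ≤ m, W (truncP m f) j = W f j := fun j hj =>
          W_congr (fun i hi => by simp only [truncP]; rw [if_pos (by omega)])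
        have hWdr : ∀ t, W (dropP m f) t = W f (m + t) - W f m := fun t => by
          rw [W_dropP]; ring
        simp only [Finset.mem_product, Finset.mem_filter]
        refine ⟨⟨mem_E.2 fun i hi => by simp only [truncP]; rw [if_neg (by omega)], ?_, ?_⟩,
                ⟨mem_E.2 fun i hi => mem_E.1 hE (i + m) (by omega), ?_, ?_⟩⟩
        · rw [hWtr m le_rfl, hWm]; norm_num
        · intro j hj1 hj2
          rw [hWtr j hj2.le]
          have := hmin j hj2
          push_cast; omega
        · rw [hWdr, Nat.add_sub_cancel' hmn.le, hWm]
          push_cast; omega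
        · intro t ht1 ht2
          rw [hWdr]
          have := h2 (m + t) (by omega) (by omega)
          rw [hWm]
          push_cast at this ⊢; omega
      · -- backward membership
        rintro ⟨a, b⟩ hp
        simp only [Finset.mem_product, Finset.mem_filter] at hp
        obtain ⟨⟨haE, ha1, ha2⟩, hbE, hb1, hb2⟩ := hp
        have ha1' : W a m = -1 := by push_cast at ha1; exact ha1
        have hb1' : W b (n - m) = -(k:ℤ) := hb1
        have hWle : ∀ j ≤ m, W (concatP m a b) j = W a j := fun j hj => W_concatP_le m a b hj
        have hWge : ∀ t, W (concatP m a b) (m + t) = W a m + W b t := W_concatP_ge m a b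
        beta_reduce
        have hnotlow : ∀ j < m, W a j ≠ -((k:ℤ)+1) := by
          intro j hj hc
          obtain ⟨j', hj'1, hj'2⟩ := exists_hit (c := -1) (by omega) (by omega : W a j ≤ -1)
          have hj'0 : j' ≠ 0 := by
            intro h; rw [h, W_zero] at hj'2; omega
          exact ha2 j' (by omega) (by omega) (by push_cast; omega)
        refine Finset.mem_filter.2 ⟨Finset.mem_filter.2 ⟨mem_E.2 fun i hi => ?_, ?_, ?_⟩, ?_, ?_⟩
        · simp only [concatP]
          rw [if_neg (by omega)]
          exact mem_E.1 hbE (i - m) (by omega)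
        · rw [show n = m + (n - m) by omega, hWge, ha1', hb1']
          push_cast; ring
        · intro j hj1 hj2
          rcases lt_trichotomy j m with hjm | rfl | hjm
          · rw [hWle j hjm.le]
            have := hnotlow j hjm
            push_cast at this ⊢; exact this
          · rw [hWle j le_rfl, ha1']
            push_cast; omega
          · rw [show j = m + (j - m) by omega, hWge, ha1']
            have := hb2 (j - m) (by omega) (by omega)
            push_cast at this ⊢; omega
        · rw [hWle m le_rfl, ha1']
        · intro j hj
          rw [hWle j hj.le]
          rcases Nat.eq_zero_or_pos j with rfl | hj0
          · rw [W_zero]; omega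
          · have := ha2 j hj0 hj
            push_cast at this ⊢; omega
      · -- left inverse
        intro f hf
        obtain ⟨hfA, -, -⟩ := Finset.mem_filter.1 hf
        obtain ⟨hE, -, -⟩ := Finset.mem_filter.1 hfA
        funext i
        simp only [concatP, truncP, dropP]
        by_cases hi : i < m
        · rw [if_pos hi, if_pos hi]
        · rw [if_neg hi]; congr 1; omega
      · -- right inverse
        rintro ⟨a, b⟩ hp
        simp only [Finset.mem_product, Finset.mem_filter] at hp
        obtain ⟨⟨haE, -⟩, -⟩ := hp
        beta_reduce
        have h1 : truncP m (concatP m a b) = a := by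
          funext i
          simp only [truncP, concatP]
          by_cases hi : i < m
          · rw [if_pos hi, if_pos hi]
          · rw [if_neg hi, eq_comm]
            exact mem_E.1 haE i (by omega)
        rw [h1, dropP_concatP]
  · -- disjointness
    intro m _ m' _ hne
    simp only [Finset.disjoint_left, Finset.mem_filter]
    rintro f ⟨-, h1, h2⟩ ⟨-, h1', h2'⟩
    rcases lt_trichotomy m m' with h | h | h
    · exact h2' m h h1
    · exact hne h
    · exact h2 m' h h1'

-- ANALYSIS LAYER

def q (k n : ℕ) : ℝ := (Nk k n : ℝ) * (1/2)^n

lemma q_nonneg (k n : ℕ) : 0 ≤ q k n := by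
  rw [q]; positivity

lemma q_le_one (k n : ℕ) : q k n ≤ 1 := by
  rw [q]
  have h := Nk_le k n
  have : (Nk k n : ℝ) ≤ 2^n := by exact_mod_cast h
  have h2 : (0:ℝ) < 2^n := by positivity
  rw [div_pow, one_pow]
  rw [mul_comm, div_mul_eq_mul_div, div_le_one h2]
  linarith

lemma q_zero {k : ℕ} (hk : 1 ≤ k) : q k 0 = 0 := by simp [q, Nk_zero k hk]

lemma q_one_one : q 1 1 = 1/2 := by simp [q, Nk_one_one]

lemma q_one_succ {n : ℕ} (hn : 1 ≤ n) : q 1 (n+1) = (1/2) * q 2 n := by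
  rw [q, q, Nk_one_succ hn, pow_succ]; ring

lemma q_eq_zero_of_lt {k n : ℕ} (h : n < k) : q k n = 0 := by
  simp [q, Nk_eq_zero_of_lt h]

lemma q_conv {k : ℕ} (hk : 1 ≤ k) (n : ℕ) :
    q (k+1) n = ∑ m ∈ Finset.range (n+1), q 1 m * q k (n-m) := by
  rw [q, Nk_conv hk n]
  push_cast
  rw [Finset.sum_mul]
  refine Finset.sum_congr rfl fun m hm => ?_
  rw [Finset.mem_range, Nat.lt_succ_iff] at hm
  rw [q, q]
  have : (1/2:ℝ)^n = (1/2)^m * (1/2)^(n-m) := by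
    rw [← pow_add]; congr 1; omega
  rw [this]; ring

lemma P_toReal_eq (P : Measure Om)
    (hP : ∀ (n : ℕ) (f : ℕ → Bool), P {ω : Om | ∀ i < n, ω i = f i} = (1/2 : ℝ≥0∞)^n)
    (k n : ℕ) : (P (hitW k n)).toReal = q k n := by
  rw [P_hitW P hP k n, ENNReal.toReal_mul, ENNReal.toReal_pow, ENNReal.toReal_natCast, q]
  norm_num

section GenFun
variable {z : ℝ} (hz : z ∈ Set.Ioo (0:ℝ) 1)

/-- generating function of the hitting counts -/
def F (k : ℕ) (z : ℝ) : ℝ := ∑' n, q k n * z^n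

include hz

lemma Sq (k : ℕ) : Summable (fun n => q k n * z^n) := by
  obtain ⟨hz0, hz1⟩ := hz
  refine Summable.of_nonneg_of_le (fun n => mul_nonneg (q_nonneg k n) (pow_nonneg hz0.le n))
    (fun n => ?_) (summable_geometric_of_lt_one hz0.le hz1)
  have h1 : q k n * z^n ≤ 1 * z^n :=
    mul_le_mul_of_nonneg_right (q_le_one k n) (pow_nonneg hz0.le n)
  linarith

lemma F_nonneg (k : ℕ) : 0 ≤ F k z :=
  tsum_nonneg fun n => mul_nonneg (q_nonneg k n) (pow_nonneg hz.1.le n)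

lemma F_succ {k : ℕ} (hk : 1 ≤ k) : F (k+1) z = F 1 z * F k z := by
  have hnorm : ∀ j : ℕ, Summable fun n => ‖q j n * z^n‖ := fun j => by
    simpa only [Real.norm_eq_abs] using (Sq hz j).abs
  rw [show F 1 z * F k z = (∑' n, q 1 n * z^n) * (∑' n, q k n * z^n) from rfl,
    tsum_mul_tsum_eq_tsum_sum_range_of_summable_norm (hnorm 1) (hnorm k)]
  rw [show F (k+1) z = ∑' n, q (k+1) n * z^n from rfl]
  refine tsum_congr fun n => ?_
  rw [q_conv hk n, Finset.sum_mul]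
  refine Finset.sum_congr rfl fun m hm => ?_
  rw [Finset.mem_range, Nat.lt_succ_iff] at hm
  have hzz : z^m * z^(n-m) = z^n := by rw [← pow_add]; congr 1; omega
  rw [← hzz]; ring

lemma F_pow (k : ℕ) : F (k+1) z = (F 1 z)^(k+1) := by
  induction k with
  | zero => simp
  | succ k ih => rw [F_succ hz (by omega), ih, pow_succ]; ring

lemma F_quad : F 1 z = z/2 + z/2 * (F 1 z)^2 := by
  have h2 : F 2 z = (F 1 z)^2 := by simpa using F_pow hz 1
  have s1 : Summable (fun n => q 1 (n+1) * z^(n+1)) := (summable_nat_add_iff 1).2 (Sq hz 1)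
  have key : ∀ n : ℕ, q 1 (n+2) * z^(n+2) = (z/2) * (q 2 (n+1) * z^(n+1)) := by
    intro n
    rw [q_one_succ (by omega : 1 ≤ n+1)]
    ring
  have e2 : F 2 z = ∑' n, q 2 (n+1) * z^(n+1) := by
    rw [show F 2 z = ∑' n, q 2 n * z^n from rfl, Summable.tsum_eq_zero_add (Sq hz 2),
      q_zero (by omega : 1 ≤ 2)]
    simp
  have e1 : F 1 z = z/2 + z/2 * F 2 z := by
    rw [show F 1 z = ∑' n, q 1 n * z^n from rfl, Summable.tsum_eq_zero_add (Sq hz 1),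
      q_zero le_rfl, Summable.tsum_eq_zero_add s1, q_one_one, tsum_congr key, tsum_mul_left, ← e2]
    ring
  rw [h2] at e1
  exact e1

end GenFun

lemma hitW_disjoint : Pairwise (Function.onFun Disjoint (fun n => hitW 1 n)) := by
  intro n n' hne
  refine Set.disjoint_left.2 fun ω h h' => ?_
  obtain ⟨h1, h2⟩ := h
  obtain ⟨h1', h2'⟩ := h'
  rcases lt_trichotomy n n' with hlt | heq | hlt
  · rcases Nat.eq_zero_or_pos n with rfl | hn
    · rw [show W ω 0 = 0 by simp [W]] at h1; norm_num at h1
    · exact h2' n hn hlt h1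
  · exact hne heq
  · rcases Nat.eq_zero_or_pos n' with rfl | hn
    · rw [show W ω 0 = 0 by simp [W]] at h1'; norm_num at h1'
    · exact h2 n' hn hlt h1'

lemma coeff_eq (k : ℕ) : ((2:ℝ)^(k+2) - 1) * (1/2)^(k+1) = 2 - (1/2)^(k+1) := by
  have h : (2:ℝ)^(k+2) * (1/2)^(k+1) = 2 := by
    rw [one_div, inv_pow, pow_succ, pow_succ]
    field_simp
  rw [sub_mul, h, one_mul]

lemma coeff_bounds (k : ℕ) : 0 ≤ ((2:ℝ)^(k+2) - 1) * (1/2)^(k+1) ∧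
    ((2:ℝ)^(k+2) - 1) * (1/2)^(k+1) ≤ 2 := by
  rw [coeff_eq]
  have h1 : (0:ℝ) < (1/2)^(k+1) := by positivity
  have h2 : ((1:ℝ)/2)^(k+1) ≤ 1 := by
    apply pow_le_one₀ <;> norm_num
  constructor <;> linarith

section Master
variable (P : Measure Om) [IsProbabilityMeasure P]
  (hP : ∀ (n : ℕ) (f : ℕ → Bool), P {ω : Om | ∀ i < n, ω i = f i} = (1/2 : ℝ≥0∞)^n)

include hP

lemma q_one_summable : Summable (fun n => q 1 n) ∧ ∑' n, q 1 n ≤ 1 := by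
  have htop : ∑' n, P (hitW 1 n) ≤ 1 := by
    rw [← measure_iUnion hitW_disjoint (fun n => measurableSet_hitW 1 n)]
    exact prob_le_one
  have hne : ∑' n, P (hitW 1 n) ≠ ⊤ := (lt_of_le_of_lt htop (by norm_num)).ne
  have hs : Summable fun n => (P (hitW 1 n)).toReal := ENNReal.summable_toReal hne
  have heq : ∀ n, (P (hitW 1 n)).toReal = q 1 n := fun n => P_toReal_eq P hP 1 n
  constructor
  · exact hs.congr heq
  · have : ∑' n, q 1 n = (∑' n, P (hitW 1 n)).toReal := by
      rw [ENNReal.tsum_toReal_eq (fun n => measure_ne_top P _)]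
      exact tsum_congr fun n => (heq n).symm
    rw [this]
    calc (∑' n, P (hitW 1 n)).toReal ≤ (1:ℝ≥0∞).toReal := ENNReal.toReal_mono (by norm_num) htop
      _ = 1 := by norm_num

variable {z : ℝ} (hz : z ∈ Set.Ioo (0:ℝ) 1)
include hz

lemma F_le_z : F 1 z ≤ z := by
  obtain ⟨hsum, hle⟩ := q_one_summable P hP
  have hterm : ∀ n, q 1 n * z^n ≤ z * q 1 n := by
    intro n
    rcases Nat.eq_zero_or_pos n with rfl | hn
    · rw [q_zero le_rfl]; simp
    · have hzn : z^n ≤ z := by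
        calc z^n ≤ z^1 := pow_le_pow_of_le_one hz.1.le hz.2.le hn
          _ = z := pow_one z
      calc q 1 n * z^n ≤ q 1 n * z := mul_le_mul_of_nonneg_left hzn (q_nonneg 1 n)
        _ = z * q 1 n := mul_comm _ _
  calc F 1 z ≤ ∑' n, z * q 1 n := Summable.tsum_le_tsum hterm (Sq hz 1) (hsum.mul_left z)
    _ = z * ∑' n, q 1 n := tsum_mul_left
    _ ≤ z * 1 := mul_le_mul_of_nonneg_left hle hz.1.le
    _ = z := mul_one z

/-- The generating function equals `(1 - √(1-z²))/z`. -/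
lemma F_eq_g : F 1 z = (1 - Real.sqrt (1 - z^2)) / z := by
  have hz0 := hz.1
  have hz1 := hz.2
  set f := F 1 z with hf
  set s := Real.sqrt (1 - z^2) with hsdef
  have hs2 : s^2 = 1 - z^2 := Real.sq_sqrt (by nlinarith)
  have hs0 : 0 ≤ s := Real.sqrt_nonneg _
  have hquad := F_quad hz
  have hfle : f ≤ z := F_le_z P hP hz
  have h0 : (z*f - (1-s)) * (z*f - (1+s)) = 0 := by
    have expand : (z*f - (1-s)) * (z*f - (1+s)) = z^2*f^2 - 2*z*f + 1 - s^2 := by ring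
    rw [expand, hs2]
    nlinarith [hquad]
  rcases mul_eq_zero.1 h0 with h | h
  · field_simp
    linarith [h]
  · exfalso
    have hzf : z * f ≤ z * z := mul_le_mul_of_nonneg_left hfle hz0.le
    nlinarith

lemma master : ∑' n, cReal P (n+1) * z^(n+1) =
    2 * ((1 - Real.sqrt (1 - z^2))/z) * (1 - (1 - Real.sqrt (1 - z^2))/z)⁻¹
    - ((1 - Real.sqrt (1 - z^2))/z / 2) * (1 - (1 - Real.sqrt (1 - z^2))/z / 2)⁻¹ := by
  have hz0 := hz.1
  have hz1 := hz.2
  set g := (1 - Real.sqrt (1 - z^2))/z with hgdef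
  have hgF : F 1 z = g := F_eq_g P hP hz
  have hg0 : 0 ≤ g := hgF ▸ F_nonneg hz 1
  have hg1 : g < 1 := lt_of_le_of_lt (hgF ▸ F_le_z P hP hz) hz1
  set a : ℕ → ℝ := fun k => ((2:ℝ)^(k+2) - 1) * (1/2)^(k+1) with hadef
  set S : ℕ → ℕ → ℝ := fun n k => a k * q (k+1) (n+1) * z^(n+1) with hSdef
  have hzn : ∀ n : ℕ, (0:ℝ) ≤ z^n := fun n => pow_nonneg hz0.le n
  have hSnonneg : ∀ n k, 0 ≤ S n k := fun n k =>
    mul_nonneg (mul_nonneg (coeff_bounds k).1 (q_nonneg _ _)) (hzn _)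
  have hfib : ∀ n, Summable (fun k => S n k) := by
    intro n
    apply summable_of_ne_finset_zero (s := Finset.range (n+1))
    intro k hk
    rw [Finset.mem_range, not_lt] at hk
    have : q (k+1) (n+1) = 0 := q_eq_zero_of_lt (by omega)
    simp [hSdef, this]
  have hval : ∀ n, ∑' k, S n k = cReal P (n+1) * z^(n+1) := by
    intro n
    rw [cReal]
    rw [show (∑' k, ((2:ℝ)^(k+2) - 1) * (1/2)^(k+1) * (P (hitW (k+1) (n+1))).toReal)
        = ∑' k, a k * q (k+1) (n+1) from
      tsum_congr fun k => by rw [P_toReal_eq P hP]]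
    rw [← tsum_mul_right]
  have hbound : ∀ n, ∑' k, S n k ≤ 2*(n+1)*z^(n+1) := by
    intro n
    rw [tsum_eq_sum (s := Finset.range (n+1)) (fun k hk => by
      rw [Finset.mem_range, not_lt] at hk
      have : q (k+1) (n+1) = 0 := q_eq_zero_of_lt (by omega)
      simp [hSdef, this])]
    calc ∑ k ∈ Finset.range (n+1), S n k
        ≤ ∑ _k ∈ Finset.range (n+1), 2*z^(n+1) := by
          refine Finset.sum_le_sum fun k _ => ?_
          have ha0 : 0 ≤ a k := by simp only [hadef]; exact (coeff_bounds k).1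
          have ha2 : a k ≤ 2 := by simp only [hadef]; exact (coeff_bounds k).2
          have h1 : a k * q (k+1) (n+1) ≤ 2 * 1 := by
            have := q_nonneg (k+1) (n+1)
            have := q_le_one (k+1) (n+1)
            nlinarith
          have := hzn (n+1)
          calc S n k = (a k * q (k+1) (n+1)) * z^(n+1) := by rw [hSdef]
            _ ≤ (2*1) * z^(n+1) := mul_le_mul_of_nonneg_right h1 (hzn _)
            _ = 2*z^(n+1) := by ring
      _ = 2*(n+1)*z^(n+1) := by
          rw [Finset.sum_const, Finset.card_range, nsmul_eq_mul]
          push_cast; ring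
  have hBsummable : Summable (fun n : ℕ => 2*((n:ℝ)+1)*z^(n+1)) := by
    have h1 : Summable (fun n : ℕ => (n:ℝ)^1 * z^n) :=
      summable_pow_mul_geometric_of_norm_lt_one 1
        (by rw [Real.norm_eq_abs, abs_of_pos hz0]; exact hz1)
    have h2 : Summable (fun n : ℕ => z^n) := summable_geometric_of_lt_one hz0.le hz1
    have h3 := (h1.add h2).mul_left (2*z)
    refine h3.congr fun n => ?_
    rw [pow_succ]
    push_cast; ring
  have hcol : Summable (fun n => ∑' k, S n k) := by
    refine Summable.of_nonneg_of_le (fun n => tsum_nonneg (hSnonneg n)) (fun n => ?_) hBsummable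
    calc ∑' k, S n k ≤ 2*(n+1)*z^(n+1) := hbound n
      _ = 2*((n:ℝ)+1)*z^(n+1) := by push_cast; ring
  have hS : Summable (Function.uncurry S) := by
    refine (summable_prod_of_nonneg (fun p => hSnonneg p.1 p.2)).2 ⟨fun n => hfib n, hcol⟩
  have hswap : ∑' n, ∑' k, S n k = ∑' k, ∑' n, S n k := (Summable.tsum_comm hS).symm
  have hinner : ∀ k, ∑' n, S n k = a k * g^(k+1) := by
    intro k
    have h1 : ∑' n, q (k+1) (n+1) * z^(n+1) = F (k+1) z := by
      rw [show F (k+1) z = ∑' n, q (k+1) n * z^n from rfl, Summable.tsum_eq_zero_add (Sq hz (k+1)),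
        q_zero (by omega : 1 ≤ k+1)]
      simp
    calc ∑' n, S n k = ∑' n, a k * (q (k+1) (n+1) * z^(n+1)) :=
          tsum_congr fun n => by rw [hSdef]; ring
      _ = a k * ∑' n, q (k+1) (n+1) * z^(n+1) := tsum_mul_left
      _ = a k * F (k+1) z := by rw [h1]
      _ = a k * g^(k+1) := by rw [F_pow hz k, hgF]
  have hgeom1 : Summable (fun k : ℕ => (2*g)*g^k) :=
    (summable_geometric_of_lt_one hg0 hg1).mul_left _
  have hg20 : 0 ≤ g/2 := by linarith
  have hg21 : g/2 < 1 := by linarith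
  have hgeom2 : Summable (fun k : ℕ => (g/2)*(g/2)^k) :=
    (summable_geometric_of_lt_one hg20 hg21).mul_left _
  have hterm : ∀ k : ℕ, a k * g^(k+1) = (2*g)*g^k - (g/2)*(g/2)^k := by
    intro k
    have ha : a k = 2 - (1/2)^(k+1) := by simp only [hadef]; exact coeff_eq k
    have e1 : (2:ℝ) * g^(k+1) = 2*g*g^k := by rw [pow_succ]; ring
    have e2 : ((1:ℝ)/2)^(k+1) * g^(k+1) = (g/2)*(g/2)^k := by
      rw [← mul_pow, show (1:ℝ)/2*g = g/2 by ring, pow_succ]; ring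
    rw [ha, sub_mul, e1, e2]
  calc ∑' n, cReal P (n+1) * z^(n+1) = ∑' n, ∑' k, S n k := tsum_congr fun n => (hval n).symm
    _ = ∑' k, ∑' n, S n k := hswap
    _ = ∑' k, ((2*g)*g^k - (g/2)*(g/2)^k) := tsum_congr fun k => by rw [hinner k, hterm k]
    _ = (∑' k, (2*g)*g^k) - ∑' k, (g/2)*(g/2)^k := Summable.tsum_sub hgeom1 hgeom2
    _ = (2*g)*(1-g)⁻¹ - (g/2)*(1-g/2)⁻¹ := by
        rw [tsum_mul_left, tsum_mul_left, tsum_geometric_of_lt_one hg0 hg1,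
          tsum_geometric_of_lt_one hg20 hg21]
    _ = 2 * g * (1 - g)⁻¹ - (g / 2) * (1 - g/2)⁻¹ := by ring

end Master

-- LIMIT PART
def G (z : ℝ) : ℝ :=
  2*((1 - Real.sqrt (1-z^2))/z)*z/(Real.sqrt (1+z) - Real.sqrt (1-z))
  - Real.sqrt (1-z)*((1 - Real.sqrt (1-z^2))/z)/(2 - (1 - Real.sqrt (1-z^2))/z)

lemma basic_facts {z : ℝ} (hz : z ∈ Set.Ioo (0:ℝ) 1) :
    Real.sqrt (1-z^2) = Real.sqrt (1-z) * Real.sqrt (1+z) ∧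
    0 < Real.sqrt (1-z) ∧ Real.sqrt (1-z) < Real.sqrt (1+z) ∧
    1 - (1 - Real.sqrt (1-z^2))/z = Real.sqrt (1-z) * (Real.sqrt (1+z) - Real.sqrt (1-z)) / z := by
  obtain ⟨hz0, hz1⟩ := hz
  have h1 : (0:ℝ) < 1 - z := by linarith
  have h2 : (0:ℝ) < 1 + z := by linarith
  have huv : Real.sqrt (1-z^2) = Real.sqrt (1-z) * Real.sqrt (1+z) := by
    rw [show (1:ℝ)-z^2 = (1-z)*(1+z) by ring, Real.sqrt_mul h1.le]
  have hu0 : 0 < Real.sqrt (1-z) := Real.sqrt_pos.2 h1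
  have hv0 : 0 < Real.sqrt (1+z) := Real.sqrt_pos.2 h2
  have huv2 : Real.sqrt (1-z) < Real.sqrt (1+z) := by
    apply Real.sqrt_lt_sqrt h1.le; linarith
  refine ⟨huv, hu0, huv2, ?_⟩
  have hu2 : Real.sqrt (1-z) ^ 2 = 1 - z := Real.sq_sqrt h1.le
  rw [huv]
  field_simp
  nlinarith [hu2]

lemma g_lt_one {z : ℝ} (hz : z ∈ Set.Ioo (0:ℝ) 1) : (1 - Real.sqrt (1-z^2))/z < 1 := by
  obtain ⟨huv, hu0, huv2, h1mg⟩ := basic_facts hz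
  have : 0 < Real.sqrt (1-z) * (Real.sqrt (1+z) - Real.sqrt (1-z)) / z :=
    div_pos (mul_pos hu0 (by linarith)) hz.1
  rw [← h1mg] at this
  linarith

lemma sqrt_identity {z : ℝ} (hz : z ∈ Set.Ioo (0:ℝ) 1) :
    Real.sqrt (1-z) * (2 * ((1 - Real.sqrt (1 - z^2))/z) * (1 - (1 - Real.sqrt (1 - z^2))/z)⁻¹
      - ((1 - Real.sqrt (1 - z^2))/z / 2) * (1 - (1 - Real.sqrt (1 - z^2))/z / 2)⁻¹) = G z := by
  obtain ⟨huv, hu0, huv2, h1mg⟩ := basic_facts hz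
  have hz0 := hz.1
  have hg1 : (1 - Real.sqrt (1-z^2))/z < 1 := g_lt_one hz
  set g := (1 - Real.sqrt (1-z^2))/z with hgdef
  set u := Real.sqrt (1-z) with hudef
  set v := Real.sqrt (1+z) with hvdef
  have h2g : (0:ℝ) < 2 - g := by linarith
  have hvu : (0:ℝ) < v - u := by linarith
  have e1 : (1:ℝ) - g/2 = (2-g)/2 := by ring
  rw [G, ← hgdef, ← hudef, ← hvdef, h1mg, e1]
  field_simp

lemma tendsto_G : Tendsto G (nhdsWithin 1 (Set.Iio 1)) (nhds (Real.sqrt 2)) := by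
  have hgcont : ContinuousAt (fun z : ℝ => (1 - Real.sqrt (1-z^2))/z) 1 := by
    apply ContinuousAt.div
    · exact (continuous_const.sub (Real.continuous_sqrt.comp
        (continuous_const.sub (continuous_pow 2)))).continuousAt
    · exact continuousAt_id
    · norm_num
  have hgval : (1 - Real.sqrt (1-(1:ℝ)^2))/(1:ℝ) = 1 := by norm_num
  have hGcont : ContinuousAt G 1 := by
    apply ContinuousAt.sub
    · apply ContinuousAt.div
      · exact ((continuousAt_const.mul hgcont).mul continuousAt_id)
      · exact ((Real.continuous_sqrt.comp (continuous_const.add continuous_id)).continuousAt.sub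
          (Real.continuous_sqrt.comp (continuous_const.sub continuous_id)).continuousAt)
      · norm_num [Real.sqrt_eq_zero']
    · apply ContinuousAt.div
      · exact ((Real.continuous_sqrt.comp
          (continuous_const.sub continuous_id)).continuousAt.mul hgcont)
      · exact continuousAt_const.sub hgcont
      · rw [hgval]; norm_num
  have hGval : G 1 = Real.sqrt 2 := by
    rw [G]
    norm_num
  have := hGcont.tendsto
  rw [hGval] at this
  exact this.mono_left nhdsWithin_le_nhds


end Aux

/-- For `0 < z < 1`, `∑_{n≥1} c_n z^n = 2(1-w)/w − (1-w)/(1+w)` where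
`w = 1 − (1−√(1−z²))/z`, and consequently `√(1-z)·∑_{n≥1} c_n z^n → √2` as `z ↑ 1`. -/
theorem hata_cn_generating_function (P : Measure Om) [IsProbabilityMeasure P]
    (hP : ∀ (n : ℕ) (f : ℕ → Bool), P {ω : Om | ∀ i < n, ω i = f i} = (1/2 : ℝ≥0∞)^n) :
    (∀ z : ℝ, z ∈ Set.Ioo (0:ℝ) 1 → ∀ w : ℝ,
      w = 1 - (1 - Real.sqrt (1 - z^2)) / z →
      ∑' n : ℕ, cReal P (n+1) * z^(n+1) = 2*(1-w)/w - (1-w)/(1+w))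
    ∧ Tendsto (fun z : ℝ => Real.sqrt (1-z) * ∑' n : ℕ, cReal P (n+1) * z^(n+1))
        (nhdsWithin 1 (Set.Iio 1)) (nhds (Real.sqrt 2)) := by
  constructor
  · intro z hz w hw
    rw [master P hP hz, hw]
    have hg1 : (1 - Real.sqrt (1-z^2))/z < 1 := g_lt_one hz
    set g := (1 - Real.sqrt (1-z^2))/z with hgdef
    have h1 : (0:ℝ) < 1 - g := by linarith
    have h2 : (0:ℝ) < 2 - g := by linarith
    have e1 : (1:ℝ) - g/2 = (2-g)/2 := by ring
    rw [e1]
    have e2 : (1:ℝ) - (1 - g) = g := by ring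
    rw [e2, show (1:ℝ) + (1-g) = 2 - g by ring]
    field_simp
  · have hIoo : Set.Ioo (0:ℝ) 1 ∈ nhdsWithin 1 (Set.Iio 1) :=
      Ioo_mem_nhdsLT_of_mem (by norm_num : (1:ℝ) ∈ Set.Ioc 0 1)
    refine Tendsto.congr' ?_ tendsto_G
    filter_upwards [hIoo] with z hz
    rw [master P hP hz, sqrt_identity hz]

end
end

section
/- Let (W'_n) be the random walk on ℤ started at 0 with i.i.d. steps equal to +2 with probability 1/3 and −1 with probability 2/3, let φ'_{−1} = inf{n ≥ 1 : W'_n = −1}, and for 0 < z < 1 set g(z) = E[z^{φ'_{−1}}] = Σ_{n≥1} z^n P(φ'_{−1} = n). Then g(z) = (z/3)·g(z)³ + 2z/3 for all 0 < z < 1, and lim_{z↑1} (1 − g(z))/√(1−z) = 1. -/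
open MeasureTheory Set Filter
open scoped ENNReal

noncomputable section

/-- The random walk `W'_n = η₁ + ⋯ + η_n` with steps `+2` or `-1`. -/
def W' (ω : Om) (n : ℕ) : ℤ := ∑ i ∈ Finset.range n, (if ω i then (2:ℤ) else -1)

/-- The event `{φ'_{-1} = n}`: the first hitting time of `-1` by the walk equals `n`. -/
def hitW' (n : ℕ) : Set Om :=
  {ω : Om | W' ω n = -1 ∧ ∀ m : ℕ, 1 ≤ m → m < n → W' ω m ≠ -1}

/-- The generating function `g(z) = E[z^{φ'_{-1}}] = ∑_{n≥1} z^n P(φ'_{-1} = n)`. -/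
def genFun (P : Measure Om) (z : ℝ) : ℝ :=
  ∑' n : ℕ, z^(n+1) * (P (hitW' (n+1))).toReal

open scoped NNReal

namespace WalkAux
open Finset
open scoped Classical
def w (b : Bool) : ℝ≥0∞ := if b then 1/3 else 2/3
def fext (n : ℕ) (f : Fin n → Bool) : ℕ → Bool :=
  fun i => if h : i < n then f ⟨i, h⟩ else false
def Cond (a : ℤ) (n : ℕ) (f : ℕ → Bool) : Prop :=
  W' f n = -a ∧ ∀ m < n, W' f m ≠ -a
def T (a : ℤ) (n : ℕ) : ℝ≥0∞ :=
  ∑ f : Fin n → Bool, if Cond a n (fext n f) then ∏ i, w (f i) else 0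
def h : ℕ → ℕ → ℝ≥0
  | 0, 0 => 1
  | _+1, 0 => 0
  | 0, _+1 => 0
  | a+1, n+1 => 2/3 * h a n + 1/3 * h (a+3) n
  termination_by a n => n
lemma h_00 : h 0 0 = 1 := by simp [h]
lemma h_succ_zero (a : ℕ) : h (a+1) 0 = 0 := by simp [h]
lemma h_zero_succ (n : ℕ) : h 0 (n+1) = 0 := by simp [h]
lemma h_succ_succ (a n : ℕ) : h (a+1) (n+1) = 2/3 * h a n + 1/3 * h (a+3) n := by rw [h]
lemma W'_zero (f : Om) : W' f 0 = 0 := by simp [W']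
lemma W'_succ' (f g : Om) (h0 : ∀ i, f (i+1) = g i) (m : ℕ) :
    W' f (m+1) = (if f 0 then (2:ℤ) else -1) + W' g m := by
  rw [W', Finset.sum_range_succ', add_comm]
  congr 1
  exact Finset.sum_congr rfl fun i _ => by rw [h0 i]
lemma fext_cons_zero (n : ℕ) (b : Bool) (g : Fin n → Bool) :
    fext (n+1) (Fin.cons b g) 0 = b := by simp [fext]
lemma fext_cons_succ (n : ℕ) (b : Bool) (g : Fin n → Bool) (i : ℕ) :
    fext (n+1) (Fin.cons b g) (i+1) = fext n g i := by
  unfold fext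
  by_cases hi : i < n
  · rw [dif_pos (by omega : i + 1 < n + 1), dif_pos hi]
    have : (⟨i+1, by omega⟩ : Fin (n+1)) = (⟨i, hi⟩ : Fin n).succ := rfl
    rw [this, Fin.cons_succ]
  · rw [dif_neg (by omega : ¬ (i + 1 < n + 1)), dif_neg hi]

-- NEW CHUNK
lemma W'_fext_cons (n : ℕ) (b : Bool) (g : Fin n → Bool) (m : ℕ) :
    W' (fext (n+1) (Fin.cons b g)) (m+1)
      = (if b then (2:ℤ) else -1) + W' (fext n g) m := by
  have := W'_succ' (fext (n+1) (Fin.cons b g)) (fext n g) (fext_cons_succ n b g) m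
  rwa [fext_cons_zero] at this

lemma cond_cons (a : ℤ) (ha : 1 ≤ a) (n : ℕ) (b : Bool) (g : Fin n → Bool) :
    Cond a (n+1) (fext (n+1) (Fin.cons b g))
      ↔ Cond (a + (if b then 2 else -1)) n (fext n g) := by
  set s : ℤ := if b then 2 else -1 with hs
  constructor
  · rintro ⟨h1, h2⟩
    rw [W'_fext_cons] at h1
    refine ⟨by omega, fun m hm heq => ?_⟩
    refine h2 (m+1) (by omega) ?_
    rw [W'_fext_cons, heq]
    ring
  · rintro ⟨h1, h2⟩
    constructor
    · rw [W'_fext_cons, h1]; ring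
    · intro m hm
      match m with
      | 0 => rw [W'_zero]; omega
      | Nat.succ k =>
        rw [W'_fext_cons]
        intro heq
        exact h2 k (by omega) (by omega)

lemma T_zero (a : ℤ) : T a 0 = if a = 0 then 1 else 0 := by
  have hc : ∀ f : Fin 0 → Bool, Cond a 0 (fext 0 f) ↔ a = 0 := by
    intro f
    constructor
    · rintro ⟨h1, -⟩; rw [W'_zero] at h1; omega
    · rintro rfl; exact ⟨by rw [W'_zero]; ring, fun m hm => absurd hm (by omega)⟩
  rw [T, Fintype.sum_unique]
  simp [hc]

lemma T_zero_succ (n : ℕ) : T 0 (n+1) = 0 := by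
  rw [T]
  refine Finset.sum_eq_zero fun f _ => ?_
  rw [if_neg]
  rintro ⟨-, h2⟩
  exact h2 0 (by omega) (by rw [W'_zero]; ring)

lemma T_succ (a : ℤ) (ha : 1 ≤ a) (n : ℕ) :
    T a (n+1) = 1/3 * T (a+2) n + 2/3 * T (a + (-1)) n := by
  have inner : ∀ b : Bool,
      (∑ g : Fin n → Bool,
        if Cond a (n+1) (fext (n+1) (Fin.cons b g)) then ∏ i, w ((Fin.cons b g : Fin (n+1) → Bool) i) else 0)
      = w b * T (a + (if b then 2 else -1)) n := by
    intro b
    rw [T, Finset.mul_sum]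
    refine Finset.sum_congr rfl fun g _ => ?_
    rw [cond_cons a ha n b g, mul_ite, mul_zero]
    refine if_congr Iff.rfl ?_ rfl
    rw [Fin.prod_univ_succ]
    simp [Fin.cons_succ, Fin.cons_zero]
  rw [T, ← Equiv.sum_comp (Fin.consEquiv (fun _ => Bool))
      (fun f => if Cond a (n+1) (fext (n+1) f) then ∏ i, w (f i) else 0),
    Fintype.sum_prod_type, Fintype.sum_bool]
  have ee : ∀ (b : Bool) (g : Fin n → Bool),
      (Fin.consEquiv (fun _ => Bool)) (b, g) = Fin.cons b g := fun b g => rfl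
  simp only [ee]
  rw [inner true, inner false]
  simp [w]

lemma T_eq_h (a n : ℕ) : T a n = (h a n : ℝ≥0∞) := by
  induction n generalizing a with
  | zero =>
    rw [T_zero]
    cases a with
    | zero => simp [h_00]
    | succ a => rw [h_succ_zero]; rw [if_neg (by omega)]; norm_num
  | succ n ih =>
    cases a with
    | zero =>
      rw [show ((0:ℕ):ℤ) = 0 by norm_num, T_zero_succ, h_zero_succ]
      norm_num
    | succ a =>
      rw [T_succ _ (by exact_mod_cast Nat.succ_le_succ (Nat.zero_le a)) n]
      have e1 : ((a+1 : ℕ) : ℤ) + 2 = ((a+3 : ℕ) : ℤ) := by push_cast; ring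
      have e2 : ((a+1 : ℕ) : ℤ) + (-1) = ((a : ℕ) : ℤ) := by push_cast; ring
      rw [e1, e2, ih, ih, h_succ_succ]
      have c3 : ((1/3 : ℝ≥0) : ℝ≥0∞) = 1/3 := by
        rw [ENNReal.coe_div (by norm_num)]; norm_num
      have c23 : ((2/3 : ℝ≥0) : ℝ≥0∞) = 2/3 := by
        rw [ENNReal.coe_div (by norm_num)]; norm_num
      push_cast [c3, c23]
      ring

lemma W'_congr {f g : Om} {n : ℕ} (hfg : ∀ i < n, f i = g i) {m : ℕ} (hm : m ≤ n) :
    W' f m = W' g m := by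
  refine Finset.sum_congr rfl fun i hi => ?_
  rw [hfg i (by simp at hi; omega)]

def cyl (n : ℕ) (f : Fin n → Bool) : Set Om := {ω | ∀ i < n, ω i = fext n f i}

lemma measurable_cyl (n : ℕ) (f : Fin n → Bool) : MeasurableSet (cyl n f) := by
  have : cyl n f = ⋂ i, ⋂ (_ : i < n), {ω : Om | ω i = fext n f i} := by
    ext ω; simp [cyl, Set.mem_iInter]
  rw [this]
  exact MeasurableSet.iInter fun i => MeasurableSet.iInter fun hi =>
    (measurable_pi_apply i) (measurableSet_singleton _)

lemma fext_lt (n : ℕ) (f : Fin n → Bool) {i : ℕ} (hi : i < n) :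
    fext n f i = f ⟨i, hi⟩ := dif_pos hi

lemma meas_eq (P : Measure Om) [IsProbabilityMeasure P]
    (hP : ∀ (n : ℕ) (f : ℕ → Bool),
      P {ω : Om | ∀ i < n, ω i = f i}
        = ∏ i ∈ Finset.range n, (if f i then (1/3 : ℝ≥0∞) else (2/3 : ℝ≥0∞)))
    (n : ℕ) (Q : Om → Prop)
    (hQ : ∀ f g : Om, (∀ i < n, f i = g i) → (Q f ↔ Q g)) :
    P {ω | Q ω} = ∑ f : Fin n → Bool, if Q (fext n f) then ∏ i, w (f i) else 0 := by
  have hsub : {ω | Q ω}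
      = ⋃ f ∈ Finset.univ.filter (fun f : Fin n → Bool => Q (fext n f)), cyl n f := by
    ext ω
    simp only [Set.mem_setOf_eq, Set.mem_iUnion, Finset.mem_filter, Finset.mem_univ, true_and,
      exists_prop]
    constructor
    · intro hω
      refine ⟨fun i => ω i, ?_, ?_⟩
      · exact (hQ ω (fext n (fun i => ω i))
          (fun i hi => by rw [fext_lt n _ hi])).mp hω
      · intro i hi; rw [fext_lt n _ hi]
    · rintro ⟨f, hf, hωf⟩
      exact (hQ (fext n f) ω (fun i hi => (hωf i hi).symm)).mp hf
  have hdisj : Set.PairwiseDisjoint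
      (↑(Finset.univ.filter (fun f : Fin n → Bool => Q (fext n f)))) (cyl n) := by
    intro f _ g _ hfg
    refine Set.disjoint_left.2 fun ω hωf hωg => hfg ?_
    funext i
    have h1 := hωf i.val i.isLt
    have h2 := hωg i.val i.isLt
    rw [fext_lt n f i.isLt] at h1
    rw [fext_lt n g i.isLt] at h2
    rw [Fin.eta] at h1 h2
    rw [← h1, ← h2]
  rw [hsub, measure_biUnion_finset hdisj (fun f _ => measurable_cyl n f), Finset.sum_filter]
  refine Finset.sum_congr rfl fun f _ => ?_
  split_ifs with hf
  · have : P (cyl n f) = ∏ i ∈ Finset.range n,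
        (if fext n f i then (1/3 : ℝ≥0∞) else (2/3 : ℝ≥0∞)) := hP n (fext n f)
    rw [this, ← Fin.prod_univ_eq_prod_range
      (fun i => if fext n f i then (1/3:ℝ≥0∞) else 2/3) n]
    exact Finset.prod_congr rfl fun i _ => by
      rw [fext_lt n f i.isLt, Fin.eta, w]
  · rfl

lemma cond_dep (a : ℤ) (n : ℕ) (f g : Om) (hfg : ∀ i < n, f i = g i) :
    Cond a n f ↔ Cond a n g := by
  unfold Cond
  constructor
  · rintro ⟨h1, h2⟩
    exact ⟨by rw [← W'_congr hfg (le_refl n)]; exact h1,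
      fun m hm => by rw [← W'_congr hfg (le_of_lt hm)]; exact h2 m hm⟩
  · rintro ⟨h1, h2⟩
    exact ⟨by rw [W'_congr hfg (le_refl n)]; exact h1,
      fun m hm => by rw [W'_congr hfg (le_of_lt hm)]; exact h2 m hm⟩

lemma hit_eq_cond (n : ℕ) : hitW' (n+1) = {ω | Cond 1 (n+1) ω} := by
  ext ω
  constructor
  · rintro ⟨h1, h2⟩
    refine ⟨h1, fun m hm => ?_⟩
    match m with
    | 0 => rw [W'_zero]; omega
    | Nat.succ k => exact h2 (k+1) (by omega) hm
  · rintro ⟨h1, h2⟩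
    exact ⟨h1, fun m hm1 hm2 => h2 m hm2⟩

lemma P_hit (P : Measure Om) [IsProbabilityMeasure P]
    (hP : ∀ (n : ℕ) (f : ℕ → Bool),
      P {ω : Om | ∀ i < n, ω i = f i}
        = ∏ i ∈ Finset.range n, (if f i then (1/3 : ℝ≥0∞) else (2/3 : ℝ≥0∞)))
    (n : ℕ) : P (hitW' (n+1)) = ((h 1 (n+1) : ℝ≥0) : ℝ≥0∞) := by
  rw [hit_eq_cond, meas_eq P hP (n+1) (Cond 1 (n+1)) (cond_dep 1 (n+1))]
  have ht := T_eq_h 1 (n+1)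
  rw [T] at ht
  simp only [Nat.cast_one] at ht
  exact ht

lemma P_hit_toReal (P : Measure Om) [IsProbabilityMeasure P]
    (hP : ∀ (n : ℕ) (f : ℕ → Bool),
      P {ω : Om | ∀ i < n, ω i = f i}
        = ∏ i ∈ Finset.range n, (if f i then (1/3 : ℝ≥0∞) else (2/3 : ℝ≥0∞)))
    (n : ℕ) : (P (hitW' (n+1))).toReal = ((h 1 (n+1) : ℝ≥0) : ℝ) := by
  rw [P_hit P hP n, ENNReal.coe_toReal]


lemma two_thirds_add : (2/3 : ℝ≥0) + 1/3 = 1 := by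
  rw [← NNReal.coe_inj]; push_cast; norm_num

lemma h_le_one (n a : ℕ) : h a n ≤ 1 := by
  induction n generalizing a with
  | zero =>
    cases a with
    | zero => rw [h_00]
    | succ a => rw [h_succ_zero]; norm_num
  | succ n ih =>
    cases a with
    | zero => rw [h_zero_succ]; norm_num
    | succ a =>
      rw [h_succ_succ]
      calc 2/3 * h a n + 1/3 * h (a+3) n ≤ 2/3 * 1 + 1/3 * 1 := by gcongr <;> exact ih _
        _ = 1 := by rw [mul_one, mul_one, two_thirds_add]

lemma sum_range_le_one (N a : ℕ) : ∑ n ∈ Finset.range N, h a n ≤ 1 := by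
  induction N generalizing a with
  | zero => simp
  | succ N ih =>
    rw [Finset.sum_range_succ']
    cases a with
    | zero =>
      simp only [h_zero_succ, h_00, Finset.sum_const_zero, zero_add]
      exact le_rfl
    | succ a =>
      rw [h_succ_zero, add_zero]
      have : ∑ n ∈ Finset.range N, h (a+1) (n+1)
          = 2/3 * ∑ n ∈ Finset.range N, h a n + 1/3 * ∑ n ∈ Finset.range N, h (a+3) n := by
        rw [Finset.mul_sum, Finset.mul_sum, ← Finset.sum_add_distrib]
        exact Finset.sum_congr rfl fun n _ => h_succ_succ a n
      rw [this]
      calc 2/3 * ∑ n ∈ Finset.range N, h a n + 1/3 * ∑ n ∈ Finset.range N, h (a+3) n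
          ≤ 2/3 * 1 + 1/3 * 1 := by gcongr <;> exact ih _
        _ = 1 := by rw [mul_one, mul_one, two_thirds_add]

lemma h_conv (n a : ℕ) :
    h (a+1) n = ∑ p ∈ Finset.HasAntidiagonal.antidiagonal n, h a p.1 * h 1 p.2 := by
  induction n generalizing a with
  | zero =>
    rw [Finset.Nat.antidiagonal_zero, Finset.sum_singleton, h_succ_zero]
    rw [show h 1 0 = 0 from h_succ_zero 0, mul_zero]
  | succ n ih =>
    rw [Finset.Nat.sum_antidiagonal_succ]
    cases a with
    | zero =>
      rw [h_00, one_mul]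
      have : ∀ p ∈ Finset.HasAntidiagonal.antidiagonal n, h 0 (p.1 + 1) * h 1 p.2 = 0 := by
        intro p _; rw [h_zero_succ, zero_mul]
      rw [Finset.sum_congr rfl this, Finset.sum_const_zero, add_zero]
    | succ a =>
      rw [show h (a+1) 0 = 0 from h_succ_zero a, zero_mul, zero_add]
      have e1 : ∀ p ∈ Finset.HasAntidiagonal.antidiagonal n, h (a+1) (p.1+1) * h 1 p.2
          = 2/3 * (h a p.1 * h 1 p.2) + 1/3 * (h (a+3) p.1 * h 1 p.2) := by
        intro p _
        rw [h_succ_succ]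
        ring
      rw [Finset.sum_congr rfl e1, Finset.sum_add_distrib, ← Finset.mul_sum, ← Finset.mul_sum,
        ← ih a, ← ih (a+3), h_succ_succ]

section Analytic

variable {z : ℝ} (hz0 : 0 < z) (hz1 : z < 1)

/-- real generating function of level-`a` first passage -/
def Ga (z : ℝ) (a : ℕ) : ℝ := ∑' n : ℕ, z^n * (h a n : ℝ)

include hz0 hz1 in
lemma summable_q (a : ℕ) : Summable (fun n : ℕ => z^n * (h a n : ℝ)) := by
  refine Summable.of_nonneg_of_le (fun n => by positivity) (fun n => ?_)
    (summable_geometric_of_lt_one hz0.le hz1)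
  calc z^n * (h a n : ℝ) ≤ z^n * 1 := by
        gcongr
        exact_mod_cast h_le_one n a
    _ = z^n := mul_one _

include hz0 hz1 in
lemma summable_q_norm (a : ℕ) : Summable (fun n : ℕ => ‖z^n * (h a n : ℝ)‖) := by
  refine (summable_q hz0 hz1 a).congr fun n => ?_
  rw [Real.norm_of_nonneg (by positivity)]

lemma Ga_zero : Ga z 0 = 1 := by
  rw [Ga]
  have e : ∀ n : ℕ, z^n * ((h 0 n : ℝ)) = if n = 0 then 1 else 0 := by
    intro n
    cases n with
    | zero => simp [h_00]
    | succ n => simp [h_zero_succ]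
  rw [tsum_congr e]
  exact tsum_ite_eq 0 1

include hz0 hz1 in
lemma Ga_succ (a : ℕ) : Ga z (a+1) = Ga z a * Ga z 1 := by
  rw [Ga, Ga, Ga,
    tsum_mul_tsum_eq_tsum_sum_antidiagonal_of_summable_norm
      (summable_q_norm hz0 hz1 a) (summable_q_norm hz0 hz1 1)]
  refine tsum_congr fun n => ?_
  rw [h_conv n a]
  push_cast
  rw [Finset.mul_sum]
  refine Finset.sum_congr rfl fun p hp => ?_
  have hpn : p.1 + p.2 = n := Finset.HasAntidiagonal.mem_antidiagonal.mp hp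
  rw [← hpn, pow_add]
  ring

include hz0 hz1 in
lemma Ga_three : Ga z 3 = (Ga z 1)^3 := by
  have h3 : Ga z 3 = Ga z 2 * Ga z 1 := Ga_succ hz0 hz1 2
  have h2 : Ga z 2 = Ga z 1 * Ga z 1 := Ga_succ hz0 hz1 1
  rw [h3, h2]
  ring

include hz0 hz1 in
lemma genFun_eq (P : Measure Om) [IsProbabilityMeasure P]
    (hP : ∀ (n : ℕ) (f : ℕ → Bool),
      P {ω : Om | ∀ i < n, ω i = f i}
        = ∏ i ∈ Finset.range n, (if f i then (1/3 : ℝ≥0∞) else (2/3 : ℝ≥0∞))) :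
    genFun P z = Ga z 1 := by
  rw [Ga, Summable.tsum_eq_zero_add (summable_q hz0 hz1 1)]
  rw [show h 1 0 = 0 from h_succ_zero 0]
  push_cast
  rw [mul_zero, zero_add, genFun]
  exact tsum_congr fun n => by rw [P_hit_toReal P hP n]

include hz0 hz1 in
lemma funEq : Ga z 1 = z/3 * (Ga z 1)^3 + 2*z/3 := by
  have hsum0 : Summable (fun n : ℕ => 2/3 * (z * (z^n * (h 0 n : ℝ)))) :=
    ((summable_q hz0 hz1 0).mul_left z).mul_left (2/3)
  have hsum3 : Summable (fun n : ℕ => 1/3 * (z * (z^n * (h 3 n : ℝ)))) :=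
    ((summable_q hz0 hz1 3).mul_left z).mul_left (1/3)
  have step : Ga z 1 = ∑' n : ℕ,
      (2/3 * (z * (z^n * (h 0 n : ℝ))) + 1/3 * (z * (z^n * (h 3 n : ℝ)))) := by
    rw [Ga, Summable.tsum_eq_zero_add (summable_q hz0 hz1 1),
      show h 1 0 = 0 from h_succ_zero 0]
    push_cast
    rw [mul_zero, zero_add]
    refine tsum_congr fun n => ?_
    rw [show h 1 (n+1) = 2/3 * h 0 n + 1/3 * h 3 n from h_succ_succ 0 n]
    push_cast
    ring
  have g0 : (∑' n : ℕ, z^n * ((h 0 n : ℝ))) = 1 := Ga_zero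
  have g3 : (∑' n : ℕ, z^n * ((h 3 n : ℝ))) = (Ga z 1)^3 := Ga_three hz0 hz1
  have key : (∑' n : ℕ,
      (2/3 * (z * (z^n * (h 0 n : ℝ))) + 1/3 * (z * (z^n * (h 3 n : ℝ)))))
      = z/3 * (Ga z 1)^3 + 2*z/3 := by
    rw [Summable.tsum_add hsum0 hsum3, tsum_mul_left, tsum_mul_left, tsum_mul_left, tsum_mul_left, g0, g3]
    ring
  rw [← key]
  exact step

include hz0 hz1 in
lemma Ga_nonneg : 0 ≤ Ga z 1 :=
  tsum_nonneg fun n => by positivity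

include hz0 hz1 in
lemma Ga_le_one : Ga z 1 ≤ 1 := by
  have hs : Summable (fun n : ℕ => ((h 1 n : ℝ))) := by
    refine summable_of_sum_range_le (c := 1) (fun n => (h 1 n).2) (fun N => ?_)
    calc ∑ n ∈ Finset.range N, ((h 1 n : ℝ))
        = ((∑ n ∈ Finset.range N, h 1 n : ℝ≥0) : ℝ) := by push_cast; rfl
      _ ≤ 1 := by exact_mod_cast sum_range_le_one N 1
  calc Ga z 1 ≤ ∑' n : ℕ, ((h 1 n : ℝ)) := by
        refine Summable.tsum_le_tsum (fun n => ?_) (summable_q hz0 hz1 1) hs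
        calc z^n * ((h 1 n : ℝ)) ≤ 1 * ((h 1 n : ℝ)) :=
              mul_le_mul_of_nonneg_right (pow_le_one₀ hz0.le hz1.le) (h 1 n).2
          _ = _ := one_mul _
    _ ≤ 1 := Summable.tsum_le_of_sum_range_le hs (fun N => by
        calc ∑ n ∈ Finset.range N, ((h 1 n : ℝ))
            = ((∑ n ∈ Finset.range N, h 1 n : ℝ≥0) : ℝ) := by push_cast; rfl
          _ ≤ 1 := by exact_mod_cast sum_range_le_one N 1)

end Analytic
end WalkAux

/-- For the random walk with i.i.d. steps `+2` with probability `1/3` and `-1` with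
probability `2/3`, the generating function `g` of the first hitting time of `-1` satisfies
`g(z) = (z/3)·g(z)³ + 2z/3` for all `0 < z < 1`, and `(1 - g(z))/√(1-z) → 1` as `z ↑ 1`. -/
theorem walk_plus2_minus1_hitting_generating_function (P : Measure Om)
    [IsProbabilityMeasure P]
    (hP : ∀ (n : ℕ) (f : ℕ → Bool),
      P {ω : Om | ∀ i < n, ω i = f i}
        = ∏ i ∈ Finset.range n, (if f i then (1/3 : ℝ≥0∞) else (2/3 : ℝ≥0∞))) :
    (∀ z : ℝ, z ∈ Set.Ioo (0:ℝ) 1 →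
      genFun P z = z/3 * (genFun P z)^3 + 2*z/3)
    ∧ Tendsto (fun z : ℝ => (1 - genFun P z) / Real.sqrt (1-z))
        (nhdsWithin 1 (Set.Iio 1)) (nhds 1) := by
  have hgen : ∀ z : ℝ, z ∈ Set.Ioo (0:ℝ) 1 → genFun P z = WalkAux.Ga z 1 :=
    fun z hz => WalkAux.genFun_eq hz.1 hz.2 P hP
  have part1 : ∀ z : ℝ, z ∈ Set.Ioo (0:ℝ) 1 →
      genFun P z = z/3 * (genFun P z)^3 + 2*z/3 := by
    intro z hz
    rw [hgen z hz]
    exact WalkAux.funEq hz.1 hz.2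
  have hg0 : ∀ z : ℝ, z ∈ Set.Ioo (0:ℝ) 1 → 0 ≤ genFun P z := fun z hz => by
    rw [hgen z hz]; exact WalkAux.Ga_nonneg hz.1 hz.2
  have hg1 : ∀ z : ℝ, z ∈ Set.Ioo (0:ℝ) 1 → genFun P z ≤ 1 := fun z hz => by
    rw [hgen z hz]; exact WalkAux.Ga_le_one hz.1 hz.2
  have key : ∀ z : ℝ, z ∈ Set.Ioo (0:ℝ) 1 →
      z * (1 - genFun P z)^2 * (genFun P z + 2) = 3*(1-z)*(genFun P z) := by
    intro z hz
    have hfe := part1 z hz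
    linear_combination (-3 : ℝ) * hfe
  refine ⟨part1, ?_⟩
  set l := nhdsWithin (1:ℝ) (Set.Iio 1) with hl
  have hIoo : ∀ᶠ z in l, z ∈ Set.Ioo (0:ℝ) 1 := by
    have h1 : ∀ᶠ z in l, z ∈ Set.Iio (1:ℝ) :=
      eventually_mem_nhdsWithin
    have h2 : ∀ᶠ z in l, z ∈ Set.Ioi (0:ℝ) :=
      eventually_nhdsWithin_of_eventually_nhds
        (isOpen_Ioi.eventually_mem (by norm_num : (1:ℝ) ∈ Set.Ioi (0:ℝ)))
    filter_upwards [h1, h2] with z hza hzb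
    exact ⟨hzb, hza⟩
  -- the lower bound for g
  have hbound : ∀ z : ℝ, z ∈ Set.Ioo (0:ℝ) 1 →
      1 - Real.sqrt (3*(1-z)/(2*z)) ≤ genFun P z := by
    intro z hz
    set g := genFun P z with hgdef
    have hk := key z hz
    have hg0z := hg0 z hz
    have hg1z := hg1 z hz
    have h2 : (1-g)^2 ≤ 3*(1-z)/(2*z) := by
      rw [le_div_iff₀ (by nlinarith [hz.1] : (0:ℝ) < 2*z)]
      nlinarith [hk, sq_nonneg (1-g), hz.1, hz.2,
        mul_nonneg (mul_nonneg hz.1.le (sq_nonneg (1-g))) hg0z,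
        mul_nonneg (sub_nonneg.2 hz.2.le) (sub_nonneg.2 hg1z)]
    have : 1 - g ≤ Real.sqrt (3*(1-z)/(2*z)) := by
      calc 1 - g ≤ |1-g| := le_abs_self _
        _ = Real.sqrt ((1-g)^2) := (Real.sqrt_sq_eq_abs _).symm
        _ ≤ Real.sqrt (3*(1-z)/(2*z)) := Real.sqrt_le_sqrt h2
    linarith
  have hlow : Tendsto (fun z : ℝ => 1 - Real.sqrt (3*(1-z)/(2*z))) l (nhds 1) := by
    have hdiv : ContinuousAt (fun z : ℝ => 3*(1-z)/(2*z)) 1 := by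
      apply ContinuousAt.div
      · fun_prop
      · fun_prop
      · norm_num
    have c : ContinuousAt (fun z : ℝ => 1 - Real.sqrt (3*(1-z)/(2*z))) 1 :=
      ContinuousAt.sub continuousAt_const (Real.continuous_sqrt.continuousAt.comp hdiv)
    have h2 := c.tendsto.mono_left (nhdsWithin_le_nhds (s := Set.Iio (1:ℝ)))
    norm_num [Real.sqrt_zero] at h2
    exact h2
  have hgtend : Tendsto (genFun P) l (nhds 1) := by
    refine tendsto_of_tendsto_of_tendsto_of_le_of_le' hlow tendsto_const_nhds ?_ ?_
    · filter_upwards [hIoo] with z hz using hbound z hz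
    · filter_upwards [hIoo] with z hz using hg1 z hz
  have heq : (fun z : ℝ => (1 - genFun P z) / Real.sqrt (1-z))
      =ᶠ[l] (fun z : ℝ => Real.sqrt (3 * genFun P z / (z * (genFun P z + 2)))) := by
    filter_upwards [hIoo] with z hz
    set g := genFun P z with hgdef
    have hk := key z hz
    have hg0z := hg0 z hz
    have hg1z := hg1 z hz
    have hz1' : (0:ℝ) < 1 - z := by linarith [hz.2]
    have hzg : (0:ℝ) < z * (g + 2) := by nlinarith [hz.1]
    have e1 : (1-g)^2/(1-z) = 3*g/(z*(g+2)) := by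
      rw [div_eq_div_iff hz1'.ne' hzg.ne']
      linear_combination hk
    rw [← Real.sqrt_sq (sub_nonneg.2 hg1z), ← Real.sqrt_div (sq_nonneg _), e1]
  have hid : Tendsto (fun z : ℝ => z) l (nhds 1) :=
    (tendsto_id (x := nhds (1:ℝ))).mono_left nhdsWithin_le_nhds
  have num : Tendsto (fun z : ℝ => 3 * genFun P z) l (nhds 3) := by
    have := hgtend.const_mul (3:ℝ)
    rwa [mul_one] at this
  have den : Tendsto (fun z : ℝ => z * (genFun P z + 2)) l (nhds 3) := by
    have := hid.mul (hgtend.add (tendsto_const_nhds (x := (2:ℝ))))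
    norm_num at this
    exact this
  have hfrac : Tendsto (fun z : ℝ => 3 * genFun P z / (z * (genFun P z + 2))) l (nhds 1) := by
    have := num.div den (by norm_num : (3:ℝ) ≠ 0)
    norm_num at this
    exact this
  have hsqrt : Tendsto (fun z : ℝ => Real.sqrt (3 * genFun P z / (z * (genFun P z + 2))))
      l (nhds 1) := by
    have := hfrac.sqrt
    rwa [Real.sqrt_one] at this
  exact hsqrt.congr' heq.symm

end
end
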